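/- Let Φ(y,x) = (1 - x - yx)² + β(y² + x²) on ℝ², with β > 0. Then (y,x) ∈ ℝ² is a critical point of Φ if and only if x = (1+y)/((1+y)² + β) and y satisfies the quintic equation y⁵ + 4y⁴ + 2(3+β)y³ + 4(1+β)y² + β(2+β)y - 1 = 0. -/

import Mathlib

/-- Critical points of `Φ(y,x) = (1 - x - yx)² + β(y² + x²)` are characterized by
`x = (1+y)/((1+y)² + β)` and the quintic equation for `y`. -/
theorem critical_points_quintic (β : ℝ) (hβ : 0 < β)
    (Φ : ℝ × ℝ → ℝ)
    (hΦ : ∀ y x, Φ (y, x) = (1 - x - y * x) ^ 2 + β * (y ^ 2 + x ^ 2)) :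
    ∀ y x : ℝ, fderiv ℝ Φ (y, x) = 0 ↔
      (x = (1 + y) / ((1 + y) ^ 2 + β) ∧
        y ^ 5 + 4 * y ^ 4 + 2 * (3 + β) * y ^ 3 + 4 * (1 + β) * y ^ 2
          + β * (2 + β) * y - 1 = 0) := by
  have hΦ' : Φ = fun q : ℝ × ℝ => (1 - q.2 - q.1 * q.2) ^ 2 + β * (q.1 ^ 2 + q.2 ^ 2) := by
    funext q
    exact hΦ q.1 q.2
  subst hΦ'
  intro y x
  have hDpos : (0:ℝ) < (1 + y) ^ 2 + β := by positivity
  have hD : ((1 + y) ^ 2 + β) ≠ 0 := ne_of_gt hDpos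
  have hd : HasFDerivAt (fun q : ℝ × ℝ => (1 - q.2 - q.1 * q.2) ^ 2 + β * (q.1 ^ 2 + q.2 ^ 2))
      (((-2*(1-x-y*x)*x + 2*β*y) • ContinuousLinearMap.fst ℝ ℝ ℝ)
        + ((-2*(1-x-y*x)*(1+y) + 2*β*x) • ContinuousLinearMap.snd ℝ ℝ ℝ)) (y, x) := by
    have h1 : HasFDerivAt (fun q : ℝ × ℝ => 1 - q.2 - q.1 * q.2)
        (0 - ContinuousLinearMap.snd ℝ ℝ ℝ -
          (((y,x):ℝ×ℝ).1 • ContinuousLinearMap.snd ℝ ℝ ℝ +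
            (ContinuousLinearMap.fst ℝ ℝ ℝ).smulRight ((y,x):ℝ×ℝ).2)) (y, x) :=
      (((hasFDerivAt_const (1:ℝ) ((y,x) : ℝ×ℝ)).sub (hasFDerivAt_snd)).sub
        ((hasFDerivAt_fst (𝕜 := ℝ) (p := ((y,x):ℝ×ℝ))).mul' hasFDerivAt_snd))
    have H := ((hasDerivAt_pow 2 (1 - x - y*x)).comp_hasFDerivAt ((y,x):ℝ×ℝ) h1).add
      ((((hasDerivAt_pow 2 y).comp_hasFDerivAt ((y,x):ℝ×ℝ)
            (hasFDerivAt_fst (𝕜 := ℝ) (p := ((y,x):ℝ×ℝ)))).add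
        ((hasDerivAt_pow 2 x).comp_hasFDerivAt ((y,x):ℝ×ℝ)
            (hasFDerivAt_snd (𝕜 := ℝ) (p := ((y,x):ℝ×ℝ))))).const_mul β)
    refine H.congr_fderiv ?_
    ext <;> simp <;> ring
  have hfd := hd.fderiv
  rw [hfd]
  constructor
  · intro h
    have ha : -2*(1-x-y*x)*x + 2*β*y = 0 := by
      have := congrFun (congrArg DFunLike.coe h) ((1,0) : ℝ × ℝ)
      simpa using this
    have hb : -2*(1-x-y*x)*(1+y) + 2*β*x = 0 := by
      have := congrFun (congrArg DFunLike.coe h) ((0,1) : ℝ × ℝ)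
      simpa using this
    have hxD : x * ((1 + y) ^ 2 + β) = 1 + y := by linear_combination (1/2) * hb
    have hx : x = (1 + y) / ((1 + y) ^ 2 + β) := by
      field_simp
      linarith [hxD]
    refine ⟨hx, ?_⟩
    rw [hx] at ha
    field_simp at ha
    have h2 : β * (y * ((1 + y) ^ 2 + β) ^ 2 - (1 + y)) = 0 := by linear_combination (1/2) * ha
    have h3 : y * ((1 + y) ^ 2 + β) ^ 2 - (1 + y) = 0 :=
      (mul_eq_zero.mp h2).resolve_left (ne_of_gt hβ)
    linear_combination h3
  · rintro ⟨hx, hq⟩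
    have hq' : y * ((1 + y) ^ 2 + β) ^ 2 = 1 + y := by linear_combination hq
    have ha : -2*(1-x-y*x)*x + 2*β*y = 0 := by
      rw [hx]; field_simp; linear_combination (2*β) * hq'
    have hb : -2*(1-x-y*x)*(1+y) + 2*β*x = 0 := by
      rw [hx]; field_simp; ring
    ext <;> simp <;> linarith [ha, hb]
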